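/- arXiv:1411.4159 — 2 statements merged into one kernel-verified Lean document; each statement's English description precedes it below -/
import Mathlib

section
/- Let R be a nonzero commutative ring with identity and let n ≥ 2. Then there exist distinct vertices A and B of APOḠ(M_n(R)) that are not adjacent (i.e., AB ≠ 0 and BA ≠ 0); consequently diam(APOḠ(M_n(R))) ≥ 2. -/
open scoped Pointwise

/-- `I` is a left ideal of the ring `R`: an additive subgroup with `R·I ⊆ I`. -/
def IsLeftIdeal (R : Type*) [Ring R] (I : AddSubgroup R) : Prop :=
  ∀ r : R, ∀ x ∈ I, r * x ∈ I

/-- `I` is a right ideal of the ring `R`: an additive subgroup with `I·R ⊆ I`. -/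
def IsRightIdeal (R : Type*) [Ring R] (I : AddSubgroup R) : Prop :=
  ∀ r : R, ∀ x ∈ I, x * r ∈ I

/-- `I` is a one-sided (left or right) ideal of `R`. -/
def IsOneSidedIdeal (R : Type*) [Ring R] (I : AddSubgroup R) : Prop :=
  IsLeftIdeal R I ∨ IsRightIdeal R I

/-- `IPO(R)`: the set of all products `I*J` of two one-sided ideals of `R`.
Here `I * J` is the additive subgroup generated by `{a*b : a ∈ I, b ∈ J}`
(the pointwise product of additive subgroups). -/
def IPO (R : Type*) [Ring R] : Set (AddSubgroup R) :=
  {A | ∃ I J : AddSubgroup R, IsOneSidedIdeal R I ∧ IsOneSidedIdeal R J ∧ A = I * J}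

/-- `A` is a vertex of `APOG(R) = Γ(IPO(R))`: a nonzero element of `IPO(R)` that is a
one-sided zero-divisor of the semigroup `IPO(R)`. -/
def APOGVertex (R : Type*) [Ring R] (A : AddSubgroup R) : Prop :=
  A ∈ IPO R ∧ A ≠ ⊥ ∧ ∃ B ∈ IPO R, B ≠ ⊥ ∧ (A * B = ⊥ ∨ B * A = ⊥)

/-- The directed edge `A → B` of `APOG(R)`: both are vertices, `A ≠ B` and `A*B = 0`. -/
def APOGEdge (R : Type*) [Ring R] (A B : AddSubgroup R) : Prop :=
  APOGVertex R A ∧ APOGVertex R B ∧ A ≠ B ∧ A * B = ⊥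

/-- The undirected graph `APOḠ(R) = Γ̄(IPO(R))` on the vertex set of `APOG(R)`:
distinct vertices `A, B` are adjacent iff `A*B = 0` or `B*A = 0`. -/
def apogGraph (R : Type*) [Ring R] : SimpleGraph {A : AddSubgroup R // APOGVertex R A} where
  Adj A B := A ≠ B ∧ ((A : AddSubgroup R) * B = ⊥ ∨ (B : AddSubgroup R) * A = ⊥)
  symm := ⟨by rintro A B ⟨hAB, h⟩; exact ⟨hAB.symm, h.symm⟩⟩
  loopless := ⟨by rintro A ⟨h, -⟩; exact h rfl⟩

section AuxMul
variable {S : Type*} [NonUnitalNonAssocRing S]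

lemma myMulMem {M N : AddSubgroup S} {m n : S} (hm : m ∈ M) (hn : n ∈ N) :
    m * n ∈ M * N :=
  AddSubmonoid.mul_mem_mul hm hn

lemma myMulLe {M N P : AddSubgroup S} (h : ∀ m ∈ M, ∀ n ∈ N, m * n ∈ P) :
    M * N ≤ P := by
  intro x hx
  have hx' : x ∈ M.toAddSubmonoid * N.toAddSubmonoid := hx
  exact AddSubmonoid.mul_le.mpr h hx'

end AuxMul

section Aux
variable (R : Type*) [CommRing R] (n : ℕ)

/-- matrices supported on column j -/
def colGroup (j : Fin n) : AddSubgroup (Matrix (Fin n) (Fin n) R) where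
  carrier := {M | ∀ i k, k ≠ j → M i k = 0}
  add_mem' := fun ha hb i k h => by simp [Matrix.add_apply, ha i k h, hb i k h]
  zero_mem' := fun i k h => rfl
  neg_mem' := fun ha i k h => by simp [Matrix.neg_apply, ha i k h]

/-- matrices supported on row i -/
def rowGroup (i : Fin n) : AddSubgroup (Matrix (Fin n) (Fin n) R) where
  carrier := {M | ∀ i' k, i' ≠ i → M i' k = 0}
  add_mem' := fun ha hb i' k h => by simp [Matrix.add_apply, ha i' k h, hb i' k h]
  zero_mem' := fun i' k h => rfl
  neg_mem' := fun ha i' k h => by simp [Matrix.neg_apply, ha i' k h]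

variable {R n}

lemma colGroup_leftIdeal (j : Fin n) :
    IsLeftIdeal (Matrix (Fin n) (Fin n) R) (colGroup R n j) := by
  intro r x hx i k hk
  rw [Matrix.mul_apply]
  exact Finset.sum_eq_zero fun m _ => by rw [hx m k hk, mul_zero]

lemma rowGroup_rightIdeal (i : Fin n) :
    IsRightIdeal (Matrix (Fin n) (Fin n) R) (rowGroup R n i) := by
  intro r x hx i' k hi'
  rw [Matrix.mul_apply]
  exact Finset.sum_eq_zero fun m _ => by rw [hx i' m hi', zero_mul]

lemma top_onesided : IsOneSidedIdeal (Matrix (Fin n) (Fin n) R) ⊤ :=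
  Or.inl fun _ _ _ => trivial

lemma mem_IPO_of_onesided {I : AddSubgroup (Matrix (Fin n) (Fin n) R)}
    (hI : IsLeftIdeal (Matrix (Fin n) (Fin n) R) I) : I ∈ IPO (Matrix (Fin n) (Fin n) R) := by
  refine ⟨⊤, I, top_onesided, Or.inl hI, le_antisymm ?_ ?_⟩
  · intro x hx
    have := myMulMem (M := (⊤ : AddSubgroup (Matrix (Fin n) (Fin n) R))) (N := I)
      (AddSubgroup.mem_top 1) hx
    simpa using this
  · exact myMulLe fun m _ x hx => hI m x hx

lemma rowGroup_IPO (i : Fin n) : rowGroup R n i ∈ IPO (Matrix (Fin n) (Fin n) R) := by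
  refine ⟨rowGroup R n i, ⊤, Or.inr (rowGroup_rightIdeal i), top_onesided, le_antisymm ?_ ?_⟩
  · intro x hx
    have := myMulMem (M := rowGroup R n i) (N := (⊤ : AddSubgroup (Matrix (Fin n) (Fin n) R)))
      hx (AddSubgroup.mem_top 1)
    simpa using this
  · exact myMulLe fun m hm x _ => rowGroup_rightIdeal i x m hm

lemma std_mem_col (i j : Fin n) : Matrix.single i j (1 : R) ∈ colGroup R n j := by
  intro i' k hk
  simp [Matrix.single, hk.symm]

lemma std_mem_row (i j : Fin n) : Matrix.single i j (1 : R) ∈ rowGroup R n i := by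
  intro i' k hi'
  simp [Matrix.single, hi'.symm]

lemma std_ne_zero [Nontrivial R] (i j : Fin n) :
    Matrix.single i j (1 : R) ≠ 0 := by
  intro h
  have := congrFun (congrFun h i) j
  simp [Matrix.single] at this

lemma col_mul_row_eq_bot {j i : Fin n} (h : j ≠ i) :
    colGroup R n j * rowGroup R n i = ⊥ := by
  refine (eq_bot_iff).mpr (myMulLe fun m hm x hx => ?_)
  refine AddSubgroup.mem_bot.mpr ?_
  ext a b
  rw [Matrix.mul_apply]
  refine Finset.sum_eq_zero fun c _ => ?_
  rcases eq_or_ne c j with rfl | hc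
  · rw [hx c b h, mul_zero]
  · rw [hm a c hc, zero_mul]

lemma ne_bot_of_mul [Nontrivial R] {A B : AddSubgroup (Matrix (Fin n) (Fin n) R)}
    {a b : Matrix (Fin n) (Fin n) R} (ha : a ∈ A) (hb : b ∈ B) (hab : a * b ≠ 0) :
    A * B ≠ ⊥ := by
  intro h
  exact hab (AddSubgroup.mem_bot.mp (h ▸ myMulMem ha hb))

end Aux

theorem matrix_apog_diam_ge_two (R : Type*) [CommRing R] [Nontrivial R]
    (n : ℕ) (hn : 2 ≤ n) :
    (∃ A B : AddSubgroup (Matrix (Fin n) (Fin n) R),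
      APOGVertex (Matrix (Fin n) (Fin n) R) A ∧
      APOGVertex (Matrix (Fin n) (Fin n) R) B ∧
      A ≠ B ∧ A * B ≠ ⊥ ∧ B * A ≠ ⊥) ∧
    2 ≤ (apogGraph (Matrix (Fin n) (Fin n) R)).ediam := by
  have h0 : 0 < n := by omega
  have h1 : 1 < n := by omega
  set i0 : Fin n := ⟨0, h0⟩
  set i1 : Fin n := ⟨1, h1⟩
  have hne : i0 ≠ i1 := by simp [i0, i1, Fin.ext_iff]
  set A := colGroup R n i0 with hA
  set B := colGroup R n i1 with hB
  have hAin := mem_IPO_of_onesided (colGroup_leftIdeal (R := R) i0)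
  have hBin := mem_IPO_of_onesided (colGroup_leftIdeal (R := R) i1)
  have hAbot : A ≠ ⊥ := fun h => std_ne_zero i0 i0 (AddSubgroup.mem_bot.mp
    (by rw [← h]; exact std_mem_col (R := R) i0 i0))
  have hBbot : B ≠ ⊥ := fun h => std_ne_zero i1 i1 (AddSubgroup.mem_bot.mp
    (by rw [← h]; exact std_mem_col (R := R) i1 i1))
  have hR1bot : rowGroup R n i1 ≠ ⊥ := fun h => std_ne_zero i1 i1 (AddSubgroup.mem_bot.mp
    (by rw [← h]; exact std_mem_row (R := R) i1 i1))
  have hR0bot : rowGroup R n i0 ≠ ⊥ := fun h => std_ne_zero i0 i0 (AddSubgroup.mem_bot.mp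
    (by rw [← h]; exact std_mem_row (R := R) i0 i0))
  have hAvert : APOGVertex (Matrix (Fin n) (Fin n) R) A :=
    ⟨hAin, hAbot, rowGroup R n i1, rowGroup_IPO i1, hR1bot,
      Or.inl (col_mul_row_eq_bot hne)⟩
  have hBvert : APOGVertex (Matrix (Fin n) (Fin n) R) B :=
    ⟨hBin, hBbot, rowGroup R n i0, rowGroup_IPO i0, hR0bot,
      Or.inl (col_mul_row_eq_bot hne.symm)⟩
  have hABne : A ≠ B := by
    intro h
    have hm := std_mem_col (R := R) i0 i0
    rw [← hA, h, hB] at hm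
    have := hm i0 i0 hne
    simp [Matrix.single] at this
  have hstd : (Matrix.single i0 i0 (1:R)) * Matrix.single i0 i1 (1:R)
      = Matrix.single i0 i1 (1:R) := by
    rw [Matrix.single_mul_single_same, one_mul]
  have hstd2 : (Matrix.single i0 i1 (1:R)) * Matrix.single i1 i0 (1:R)
      = Matrix.single i0 i0 (1:R) := by
    rw [Matrix.single_mul_single_same, one_mul]
  have hABmul : A * B ≠ ⊥ :=
    ne_bot_of_mul (std_mem_col i0 i0) (std_mem_col i0 i1)
      (by rw [hstd]; exact std_ne_zero i0 i1)
  have hBAmul : B * A ≠ ⊥ :=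
    ne_bot_of_mul (std_mem_col i0 i1) (std_mem_col i1 i0)
      (by rw [hstd2]; exact std_ne_zero i0 i0)
  refine ⟨⟨A, B, hAvert, hBvert, hABne, hABmul, hBAmul⟩, ?_⟩
  set a : {X : AddSubgroup (Matrix (Fin n) (Fin n) R) // APOGVertex _ X} := ⟨A, hAvert⟩
  set b : {X : AddSubgroup (Matrix (Fin n) (Fin n) R) // APOGVertex _ X} := ⟨B, hBvert⟩
  have hab : a ≠ b := fun h => hABne (congrArg Subtype.val h)
  have hnadj : ¬ (apogGraph (Matrix (Fin n) (Fin n) R)).Adj a b := by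
    rintro ⟨-, h | h⟩
    · exact hABmul h
    · exact hBAmul h
  have hd0 : (apogGraph (Matrix (Fin n) (Fin n) R)).edist a b ≠ 0 :=
    fun h => hab (SimpleGraph.edist_eq_zero_iff.mp h)
  have hd1 : (apogGraph (Matrix (Fin n) (Fin n) R)).edist a b ≠ 1 :=
    fun h => hnadj (SimpleGraph.edist_eq_one_iff_adj.mp h)
  have h1d : 1 ≤ (apogGraph (Matrix (Fin n) (Fin n) R)).edist a b :=
    Order.one_le_iff_pos.mpr (pos_iff_ne_zero.mpr hd0)
  have hlt : (1 : ℕ∞) < (apogGraph (Matrix (Fin n) (Fin n) R)).edist a b :=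
    lt_of_le_of_ne h1d (Ne.symm hd1)
  have h2 : (2 : ℕ∞) ≤ (apogGraph (Matrix (Fin n) (Fin n) R)).edist a b := by
    have := Order.add_one_le_of_lt hlt
    simpa [one_add_one_eq_two] using this
  exact le_trans h2 SimpleGraph.edist_le_ediam
end

section
/- Let R be a commutative ring with identity and let n ≥ 2. Then diam(APOḠ(M_n(R))) ≥ diam(AG(R)), where AG(R) is the annihilating-ideal graph of R. -/
open scoped Pointwise

/-- A vertex of the annihilating-ideal graph `AG(R)` of a commutative ring: a nonzero
ideal annihilated by some nonzero ideal. -/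
def AGVertex (R : Type*) [CommRing R] (I : Ideal R) : Prop :=
  I ≠ ⊥ ∧ ∃ J : Ideal R, J ≠ ⊥ ∧ I * J = ⊥

/-- The annihilating-ideal graph `AG(R)` of a commutative ring `R`. -/
def agGraph (R : Type*) [CommRing R] : SimpleGraph {I : Ideal R // AGVertex R I} where
  Adj I J := I ≠ J ∧ (I : Ideal R) * J = ⊥
  symm := ⟨by rintro I J ⟨hIJ, h⟩; exact ⟨hIJ.symm, by rwa [mul_comm]⟩⟩
  loopless := ⟨by rintro I ⟨h, -⟩; exact h rfl⟩

/-! ### Auxiliary material -/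

section AddSubgroupMul
variable {S : Type*} [Ring S]

lemma addSubgroup_mul_mem_mul {A B : AddSubgroup S} {a b : S} (ha : a ∈ A) (hb : b ∈ B) :
    a * b ∈ A * B :=
  AddSubmonoid.mul_mem_mul ha hb

lemma addSubgroup_mul_le {A B C : AddSubgroup S} :
    A * B ≤ C ↔ ∀ a ∈ A, ∀ b ∈ B, a * b ∈ C := by
  constructor
  · intro h a ha b hb
    exact h (addSubgroup_mul_mem_mul ha hb)
  · intro h x hx
    have hx' : x ∈ A.toAddSubmonoid * B.toAddSubmonoid := hx
    exact AddSubmonoid.mul_induction_on hx' (fun a ha b hb => h a ha b hb)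
      (fun x y hx hy => C.add_mem hx hy)

lemma addSubgroup_mul_eq_bot_iff {A B : AddSubgroup S} :
    A * B = ⊥ ↔ ∀ a ∈ A, ∀ b ∈ B, a * b = 0 := by
  rw [eq_bot_iff, addSubgroup_mul_le]
  simp [AddSubgroup.mem_bot]

end AddSubgroupMul

section Mat
variable {R : Type*} [CommRing R] {n : ℕ}

/-- The additive subgroup of matrices all of whose entries lie in the ideal `I`. -/
def matSub (n : ℕ) (I : Ideal R) : AddSubgroup (Matrix (Fin n) (Fin n) R) where
  carrier := {m | ∀ i j, m i j ∈ I}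
  add_mem' := fun {a b} ha hb i j => by
    simpa [Matrix.add_apply] using I.add_mem (ha i j) (hb i j)
  zero_mem' := fun i j => by simp
  neg_mem' := fun {a} ha i j => by
    simpa [Matrix.neg_apply] using I.neg_mem (ha i j)

lemma mem_matSub {I : Ideal R} {m : Matrix (Fin n) (Fin n) R} :
    m ∈ matSub n I ↔ ∀ i j, m i j ∈ I := Iff.rfl

lemma stdBasisMatrix_mem_matSub {I : Ideal R} {r : R} (hr : r ∈ I) (i j : Fin n) :
    Matrix.single i j r ∈ matSub n I := by
  intro k l
  rw [Matrix.single]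
  dsimp only [Matrix.of_apply]
  split_ifs
  · exact hr
  · exact I.zero_mem

lemma matSub_isLeftIdeal (I : Ideal R) :
    IsLeftIdeal (Matrix (Fin n) (Fin n) R) (matSub n I) := by
  intro m x hx i j
  rw [Matrix.mul_apply]
  exact I.sum_mem fun k _ => I.mul_mem_left _ (hx k j)

lemma matSub_mem_IPO (I : Ideal R) : matSub n I ∈ IPO (Matrix (Fin n) (Fin n) R) := by
  have htop : IsOneSidedIdeal (Matrix (Fin n) (Fin n) R) ⊤ :=
    Or.inl (fun r x _ => AddSubgroup.mem_top _)
  have heq : matSub n I = ⊤ * matSub n I := by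
    refine le_antisymm (fun x hx => ?_) (addSubgroup_mul_le.2 fun a _ b hb => ?_)
    · simpa using addSubgroup_mul_mem_mul (AddSubgroup.mem_top (1 : Matrix (Fin n) (Fin n) R)) hx
    · exact matSub_isLeftIdeal I a b hb
  show ∃ I' J' : AddSubgroup (Matrix (Fin n) (Fin n) R),
      IsOneSidedIdeal (Matrix (Fin n) (Fin n) R) I' ∧
        IsOneSidedIdeal (Matrix (Fin n) (Fin n) R) J' ∧ matSub n I = I' * J'
  exact ⟨⊤, matSub n I, htop, Or.inl (matSub_isLeftIdeal I), heq⟩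

lemma matSub_ne_bot {I : Ideal R} (hn : 0 < n) (hI : I ≠ ⊥) : matSub n I ≠ ⊥ := by
  obtain ⟨r, hr, hr0⟩ := (Submodule.ne_bot_iff I).1 hI
  intro h
  have hm : Matrix.single (⟨0, hn⟩ : Fin n) ⟨0, hn⟩ r ∈ (⊥ : AddSubgroup (Matrix (Fin n) (Fin n) R)) :=
    h ▸ stdBasisMatrix_mem_matSub hr _ _
  rw [AddSubgroup.mem_bot] at hm
  apply hr0
  have := congrFun (congrFun hm ⟨0, hn⟩) ⟨0, hn⟩
  simpa using this

lemma matSub_injective (hn : 0 < n) {I J : Ideal R} (h : matSub n I = matSub n J) : I = J := by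
  ext r
  constructor <;> intro hr
  · have := h ▸ stdBasisMatrix_mem_matSub hr (⟨0, hn⟩ : Fin n) ⟨0, hn⟩
    simpa using this ⟨0, hn⟩ ⟨0, hn⟩
  · have := h.symm ▸ stdBasisMatrix_mem_matSub hr (⟨0, hn⟩ : Fin n) ⟨0, hn⟩
    simpa using this ⟨0, hn⟩ ⟨0, hn⟩

lemma matSub_mul_bot {I J : Ideal R} (h : I * J = ⊥) : matSub n I * matSub n J = ⊥ := by
  rw [addSubgroup_mul_eq_bot_iff]
  intro a ha b hb
  ext i j
  rw [Matrix.mul_apply, Matrix.zero_apply]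
  refine Finset.sum_eq_zero fun k _ => ?_
  have : a i k * b k j ∈ I * J := Ideal.mul_mem_mul (ha i k) (hb k j)
  rw [h] at this
  simpa using this

lemma bot_of_matSub_mul {I J : Ideal R} (hn : 0 < n)
    (h : matSub n I * matSub n J = ⊥ ∨ matSub n J * matSub n I = ⊥) : I * J = ⊥ := by
  rw [eq_bot_iff]
  refine Submodule.mul_le.2 fun r hr s hs => ?_
  set i0 : Fin n := ⟨0, hn⟩
  rw [Ideal.mem_bot]
  rcases h with h | h
  · have h2 := addSubgroup_mul_eq_bot_iff.1 h _ (stdBasisMatrix_mem_matSub hr i0 i0)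
      _ (stdBasisMatrix_mem_matSub hs i0 i0)
    rw [Matrix.single_mul_single_same] at h2
    have := congrFun (congrFun h2 i0) i0
    simpa using this
  · have h2 := addSubgroup_mul_eq_bot_iff.1 h _ (stdBasisMatrix_mem_matSub hs i0 i0)
      _ (stdBasisMatrix_mem_matSub hr i0 i0)
    rw [Matrix.single_mul_single_same] at h2
    have := congrFun (congrFun h2 i0) i0
    simpa [mul_comm] using this

/-- If `Mₙ(I)` annihilates `A` on either side, `I` kills every entry of every element of `A`. -/
lemma entry_ann {I : Ideal R} {A : AddSubgroup (Matrix (Fin n) (Fin n) R)}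
    (h : matSub n I * A = ⊥ ∨ A * matSub n I = ⊥) :
    ∀ r ∈ I, ∀ a ∈ A, ∀ i j, r * a i j = 0 := by
  intro r hr a ha i j
  rcases h with h | h
  · have h2 := addSubgroup_mul_eq_bot_iff.1 h _ (stdBasisMatrix_mem_matSub hr i i) a ha
    have := congrFun (congrFun h2 i) j
    simpa using this
  · have h2 := addSubgroup_mul_eq_bot_iff.1 h a ha _ (stdBasisMatrix_mem_matSub hr j j)
    have := congrFun (congrFun h2 i) j
    simpa [mul_comm] using this

/-- The ideal of `R` generated by all entries of elements of `A`. -/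
def entryIdeal (A : AddSubgroup (Matrix (Fin n) (Fin n) R)) : Ideal R :=
  Ideal.span {x | ∃ a ∈ A, ∃ i j, a i j = x}

lemma entryIdeal_ne_bot {A : AddSubgroup (Matrix (Fin n) (Fin n) R)} (hA : A ≠ ⊥) :
    entryIdeal A ≠ ⊥ := by
  intro hbot
  apply hA
  rw [eq_bot_iff]
  intro a ha
  rw [AddSubgroup.mem_bot]
  ext i j
  have h : a i j ∈ entryIdeal A := Ideal.subset_span ⟨a, ha, i, j, rfl⟩
  rw [hbot] at h
  simpa using h

lemma mul_entryIdeal_bot {I : Ideal R} {A : AddSubgroup (Matrix (Fin n) (Fin n) R)}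
    (h : ∀ r ∈ I, ∀ a ∈ A, ∀ i j, r * a i j = 0) : I * entryIdeal A = ⊥ := by
  rw [eq_bot_iff]
  refine Submodule.mul_le.2 fun r hr x hx => ?_
  rw [Ideal.mem_bot]
  induction hx using Submodule.span_induction with
  | mem x hxs =>
    obtain ⟨a, ha, i, j, rfl⟩ := hxs
    exact h r hr a ha i j
  | zero => exact mul_zero r
  | add x y _ _ hx hy => rw [mul_add, hx, hy, add_zero]
  | smul c x _ hx => rw [smul_eq_mul, mul_comm c x, ← mul_assoc, hx, zero_mul]

end Mat

section Walks
variable {V : Type*} {G : SimpleGraph V}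

lemma edist_le_one_of_adj {u v : V} (h : G.Adj u v) : G.edist u v ≤ 1 :=
  le_of_eq (SimpleGraph.edist_eq_one_iff_adj.2 h)

lemma edist_le_two_of_adj {u x v : V} (h1 : G.Adj u x) (h2 : G.Adj x v) :
    G.edist u v ≤ 2 := by
  have := SimpleGraph.edist_le
    (SimpleGraph.Walk.cons h1 (SimpleGraph.Walk.cons h2 SimpleGraph.Walk.nil))
  simpa using this

lemma edist_le_three_of_adj {u x y v : V} (h1 : G.Adj u x) (h2 : G.Adj x y) (h3 : G.Adj y v) :
    G.edist u v ≤ 3 := by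
  have := SimpleGraph.edist_le
    (SimpleGraph.Walk.cons h1 (SimpleGraph.Walk.cons h2
      (SimpleGraph.Walk.cons h3 SimpleGraph.Walk.nil)))
  simpa using this

end Walks

section AGDiam
variable {R : Type*} [CommRing R]

private lemma mkne {p : Ideal R → Prop} {I J : Ideal R} {hI : p I} {hJ : p J} (h : I ≠ J) :
    (⟨I, hI⟩ : {I : Ideal R // p I}) ≠ ⟨J, hJ⟩ :=
  fun e => h (congrArg Subtype.val e)

/-- Behboodi–Rakeei: the annihilating-ideal graph has diameter at most `3`. -/
lemma ag_edist_le_three (u v : {I : Ideal R // AGVertex R I}) :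
    (agGraph R).edist u v ≤ 3 := by
  obtain ⟨I, hI⟩ := u
  obtain ⟨J, hJ⟩ := v
  by_cases hIJ : I = J
  · rw [show (⟨I, hI⟩ : {I : Ideal R // AGVertex R I}) = ⟨J, hJ⟩ from Subtype.ext hIJ,
      SimpleGraph.edist_self]
    exact zero_le
  obtain ⟨hI0, I₀, hI₀0, hII₀⟩ := id hI
  obtain ⟨hJ0, J₀, hJ₀0, hJJ₀⟩ := id hJ
  by_cases h0 : I * J = ⊥
  · have a1 : (agGraph R).Adj ⟨I, hI⟩ ⟨J, hJ⟩ := ⟨mkne hIJ, h0⟩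
    have hb : (1 : ℕ∞) ≤ 3 := by norm_num
    exact le_trans (edist_le_one_of_adj a1) hb
  by_cases h1 : I₀ * J = ⊥
  · have hXv : AGVertex R I₀ := ⟨hI₀0, I, hI0, by rwa [mul_comm] at hII₀⟩
    have hne1 : I ≠ I₀ := fun e => h0 (by rw [e]; exact h1)
    have hne2 : I₀ ≠ J := fun e => h0 (e ▸ hII₀)
    have a1 : (agGraph R).Adj ⟨I, hI⟩ ⟨I₀, hXv⟩ := ⟨mkne hne1, hII₀⟩
    have a2 : (agGraph R).Adj ⟨I₀, hXv⟩ ⟨J, hJ⟩ := ⟨mkne hne2, h1⟩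
    have hb : (2 : ℕ∞) ≤ 3 := by norm_num
    exact le_trans (edist_le_two_of_adj a1 a2) hb
  by_cases h2 : I * J₀ = ⊥
  · have hXv : AGVertex R J₀ := ⟨hJ₀0, J, hJ0, by rwa [mul_comm] at hJJ₀⟩
    have hne1 : I ≠ J₀ := fun e => h0 (by rw [e, mul_comm]; exact hJJ₀)
    have hne2 : J₀ ≠ J := fun e => h0 (by rw [← e]; exact h2)
    have a1 : (agGraph R).Adj ⟨I, hI⟩ ⟨J₀, hXv⟩ := ⟨mkne hne1, h2⟩
    have a2 : (agGraph R).Adj ⟨J₀, hXv⟩ ⟨J, hJ⟩ := ⟨mkne hne2, by rwa [mul_comm] at hJJ₀⟩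
    have hb : (2 : ℕ∞) ≤ 3 := by norm_num
    exact le_trans (edist_le_two_of_adj a1 a2) hb
  by_cases h3 : I₀ * J₀ = ⊥
  · have hX1 : AGVertex R I₀ := ⟨hI₀0, I, hI0, by rwa [mul_comm] at hII₀⟩
    have hX2 : AGVertex R J₀ := ⟨hJ₀0, J, hJ0, by rwa [mul_comm] at hJJ₀⟩
    have hne1 : I ≠ I₀ := fun e => h2 (by rw [e]; exact h3)
    have hne2 : I₀ ≠ J₀ := fun e => h1 (by rw [e, mul_comm]; exact hJJ₀)
    have hne3 : J₀ ≠ J := fun e => h1 (e ▸ h3)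
    have a1 : (agGraph R).Adj ⟨I, hI⟩ ⟨I₀, hX1⟩ := ⟨mkne hne1, hII₀⟩
    have a2 : (agGraph R).Adj ⟨I₀, hX1⟩ ⟨J₀, hX2⟩ := ⟨mkne hne2, h3⟩
    have a3 : (agGraph R).Adj ⟨J₀, hX2⟩ ⟨J, hJ⟩ := ⟨mkne hne3, by rwa [mul_comm] at hJJ₀⟩
    exact edist_le_three_of_adj a1 a2 a3
  · have e1 : I * (I₀ * J₀) = ⊥ := by rw [← mul_assoc, hII₀, Ideal.bot_mul]
    have e2 : (I₀ * J₀) * J = ⊥ := by rw [mul_assoc, mul_comm J₀ J, hJJ₀, Ideal.mul_bot]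
    have hXv : AGVertex R (I₀ * J₀) := ⟨h3, I, hI0, by rwa [mul_comm] at e1⟩
    have hne1 : I ≠ I₀ * J₀ := fun e => h0 (by rw [e]; exact e2)
    have hne2 : I₀ * J₀ ≠ J := fun e => h0 (e ▸ e1)
    have a1 : (agGraph R).Adj ⟨I, hI⟩ ⟨I₀ * J₀, hXv⟩ := ⟨mkne hne1, e1⟩
    have a2 : (agGraph R).Adj ⟨I₀ * J₀, hXv⟩ ⟨J, hJ⟩ := ⟨mkne hne2, e2⟩
    have hb : (2 : ℕ∞) ≤ 3 := by norm_num
    exact le_trans (edist_le_two_of_adj a1 a2) hb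

end AGDiam

/-- For a commutative ring `R` and `n ≥ 2`,
`diam(APOḠ(Mₙ(R))) ≥ diam(AG(R))`. -/
theorem matrix_apog_diam_ge_ag_diam (R : Type*) [CommRing R] (n : ℕ) (hn : 2 ≤ n) :
    (agGraph R).ediam ≤ (apogGraph (Matrix (Fin n) (Fin n) R)).ediam := by
  have hn0 : 0 < n := lt_of_lt_of_le two_pos hn
  apply SimpleGraph.ediam_le_of_edist_le
  rintro ⟨I, hI⟩ ⟨J, hJ⟩
  have hφI : APOGVertex (Matrix (Fin n) (Fin n) R) (matSub n I) := by
    obtain ⟨hI0, K, hK0, hIK⟩ := id hI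
    exact ⟨matSub_mem_IPO I, matSub_ne_bot hn0 hI0, matSub n K, matSub_mem_IPO K,
      matSub_ne_bot hn0 hK0, Or.inl (matSub_mul_bot hIK)⟩
  have hφJ : APOGVertex (Matrix (Fin n) (Fin n) R) (matSub n J) := by
    obtain ⟨hJ0, K, hK0, hJK⟩ := id hJ
    exact ⟨matSub_mem_IPO J, matSub_ne_bot hn0 hJ0, matSub n K, matSub_mem_IPO K,
      matSub_ne_bot hn0 hK0, Or.inl (matSub_mul_bot hJK)⟩
  refine le_trans ?_ (SimpleGraph.edist_le_ediam
    (u := (⟨matSub n I, hφI⟩ : {A // APOGVertex (Matrix (Fin n) (Fin n) R) A}))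
    (v := ⟨matSub n J, hφJ⟩))
  rcases le_or_gt 3 ((apogGraph (Matrix (Fin n) (Fin n) R)).edist ⟨matSub n I, hφI⟩
      ⟨matSub n J, hφJ⟩) with h3 | h3
  · exact le_trans (ag_edist_le_three _ _) h3
  · have hne : (apogGraph (Matrix (Fin n) (Fin n) R)).edist ⟨matSub n I, hφI⟩
        ⟨matSub n J, hφJ⟩ ≠ ⊤ := ne_top_of_lt h3
    obtain ⟨k, hk⟩ : ∃ m : ℕ, (apogGraph (Matrix (Fin n) (Fin n) R)).edist ⟨matSub n I, hφI⟩
        ⟨matSub n J, hφJ⟩ = (m : ℕ∞) := by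
      lift (apogGraph (Matrix (Fin n) (Fin n) R)).edist ⟨matSub n I, hφI⟩ ⟨matSub n J, hφJ⟩
        to ℕ using hne with m hm
      exact ⟨m, rfl⟩
    rw [hk]
    rw [hk] at h3
    have hk3 : k < 3 := by exact_mod_cast h3
    obtain ⟨w, hw⟩ := SimpleGraph.exists_walk_of_edist_eq_coe hk
    interval_cases k
    · -- distance 0 : same vertex
      have h := SimpleGraph.Walk.eq_of_length_eq_zero hw
      have hIJ : I = J := matSub_injective hn0 (congrArg Subtype.val h)
      rw [show (⟨I, hI⟩ : {I : Ideal R // AGVertex R I}) = ⟨J, hJ⟩ from Subtype.ext hIJ,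
        SimpleGraph.edist_self]
      exact zero_le
    · -- distance 1 : adjacent
      have hk1 : (apogGraph (Matrix (Fin n) (Fin n) R)).edist ⟨matSub n I, hφI⟩
          ⟨matSub n J, hφJ⟩ = 1 := by rw [hk]; norm_num
      obtain ⟨hne', hmul⟩ := SimpleGraph.edist_eq_one_iff_adj.1 hk1
      have hIJ : I ≠ J := fun e => hne' (by subst e; rfl)
      have a1 : (agGraph R).Adj ⟨I, hI⟩ ⟨J, hJ⟩ := ⟨mkne hIJ, bot_of_matSub_mul hn0 hmul⟩
      have hb : (1 : ℕ∞) ≤ ((1 : ℕ) : ℕ∞) := by norm_num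
      exact le_trans (edist_le_one_of_adj a1) hb
    · -- distance 2 : path through a middle vertex
      have h1 : (apogGraph (Matrix (Fin n) (Fin n) R)).Adj ⟨matSub n I, hφI⟩ (w.getVert 1) := by
        have := w.adj_getVert_succ (i := 0) (by omega)
        simpa [SimpleGraph.Walk.getVert_zero] using this
      have h2 : (apogGraph (Matrix (Fin n) (Fin n) R)).Adj (w.getVert 1)
          ⟨matSub n J, hφJ⟩ := by
        have hgv : w.getVert 2 = ⟨matSub n J, hφJ⟩ := by
          rw [← hw]; exact w.getVert_length
        have := w.adj_getVert_succ (i := 1) (by omega)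
        rw [show 1 + 1 = 2 from rfl, hgv] at this
        exact this
      generalize hmid : w.getVert 1 = x at h1 h2
      obtain ⟨A, hA⟩ := x
      have PI : ∀ r ∈ I, ∀ a ∈ A, ∀ i j, r * a i j = 0 := entry_ann h1.2
      have PJ : ∀ r ∈ J, ∀ a ∈ A, ∀ i j, r * a i j = 0 := entry_ann h2.2.symm
      have eI : I * entryIdeal A = ⊥ := mul_entryIdeal_bot PI
      have eJ : J * entryIdeal A = ⊥ := mul_entryIdeal_bot PJ
      have hX0 : entryIdeal A ≠ ⊥ := entryIdeal_ne_bot hA.2.1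
      have hXv : AGVertex R (entryIdeal A) := ⟨hX0, I, hI.1, by rwa [mul_comm] at eI⟩
      have hb2 : (2 : ℕ∞) ≤ ((2 : ℕ) : ℕ∞) := by norm_num
      have hb1 : (1 : ℕ∞) ≤ ((2 : ℕ) : ℕ∞) := by norm_num
      by_cases hIJ : I = J
      · rw [show (⟨I, hI⟩ : {I : Ideal R // AGVertex R I}) = ⟨J, hJ⟩ from Subtype.ext hIJ,
          SimpleGraph.edist_self]
        exact zero_le
      by_cases hXI : entryIdeal A = I
      · have hb : I * J = ⊥ := by rw [mul_comm, ← hXI]; exact eJ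
        have a1 : (agGraph R).Adj ⟨I, hI⟩ ⟨J, hJ⟩ := ⟨mkne hIJ, hb⟩
        exact le_trans (edist_le_one_of_adj a1) hb1
      by_cases hXJ : entryIdeal A = J
      · have hb : I * J = ⊥ := hXJ ▸ eI
        have a1 : (agGraph R).Adj ⟨I, hI⟩ ⟨J, hJ⟩ := ⟨mkne hIJ, hb⟩
        exact le_trans (edist_le_one_of_adj a1) hb1
      · have a1 : (agGraph R).Adj ⟨I, hI⟩ ⟨entryIdeal A, hXv⟩ :=
          ⟨mkne (fun e => hXI e.symm), eI⟩
        have a2 : (agGraph R).Adj ⟨entryIdeal A, hXv⟩ ⟨J, hJ⟩ :=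
          ⟨mkne hXJ, by rwa [mul_comm] at eJ⟩
        exact le_trans (edist_le_two_of_adj a1 a2) hb2
end
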